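/- Identifying two vertices u, v on the same side X of a bipartite graph transforms the color compatibility matrix by restricting to the rows indexed by colorings x : X → Fin q with x(u) = x(v). Consequently, if a bipartite graph G is obtained from a bipartite graph H by identifying vertices within sides, then the color compatibility matrix of G is a submatrix of that of H, and hence rank(M_G) ≤ rank(M_H) over any field. -/

import Mathlib

open Matrix

lemma rank_submatrix_le_general {K : Type*} [Field K]
    {m n m' n' : Type*} [Fintype m] [Fintype n] [Fintype m'] [Fintype n']
    (A : Matrix m n K) (r : m' → m) (c : n' → n) :
    (A.submatrix r c).rank ≤ A.rank := by
  rw [rank_eq_finrank_span_cols, rank_eq_finrank_span_cols]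
  have h : (A.submatrix r c)ᵀ = Aᵀ.submatrix c r := rfl
  change Module.finrank K (Submodule.span K (Set.range (Aᵀ.submatrix c r))) ≤
    Module.finrank K (Submodule.span K (Set.range Aᵀ))
  set L := LinearMap.funLeft K K r
  have hsub : Set.range (Aᵀ.submatrix c r) ⊆ L '' Set.range Aᵀ := by
    rintro _ ⟨j, rfl⟩
    exact ⟨Aᵀ (c j), ⟨c j, rfl⟩, rfl⟩
  calc Module.finrank K (Submodule.span K (Set.range (Aᵀ.submatrix c r)))
      ≤ Module.finrank K (Submodule.map L (Submodule.span K (Set.range Aᵀ))) := by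
        apply Submodule.finrank_mono
        rw [← Submodule.span_image]
        exact Submodule.span_mono hsub
    _ ≤ Module.finrank K (Submodule.span K (Set.range Aᵀ)) :=
        Submodule.finrank_map_le _ _

/-- Identifying vertices within the sides of a bipartite graph (via maps f, g) turns the
color compatibility matrix of the new graph into a submatrix of the original one, so the
rank can only decrease. -/
theorem stmt6 {K : Type*} [Field K] (q : ℕ)
    {X Y X' Y' : Type*} [Fintype X] [Fintype Y] [Fintype X'] [Fintype Y']
    [DecidableEq X] [DecidableEq Y] [DecidableEq X'] [DecidableEq Y']
    (f : X → X') (g : Y → Y') (E : Finset (X × Y))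
    (MH : Matrix (X → Fin q) (Y → Fin q) K)
    (hMH : ∀ x y, MH x y = if ∀ e ∈ E, x e.1 ≠ y e.2 then 1 else 0)
    (MG : Matrix (X' → Fin q) (Y' → Fin q) K)
    (hMG : ∀ x y, MG x y = if ∀ e ∈ E, x (f e.1) ≠ y (g e.2) then 1 else 0) :
    MG = MH.submatrix (fun x : X' → Fin q => x ∘ f) (fun y : Y' → Fin q => y ∘ g) ∧
    MG.rank ≤ MH.rank := by
  have heq : MG = MH.submatrix (fun x : X' → Fin q => x ∘ f)
      (fun y : Y' → Fin q => y ∘ g) := by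
    ext x y
    rw [hMG, Matrix.submatrix_apply, hMH]
    rfl
  exact ⟨heq, heq ▸ rank_submatrix_le_general MH _ _⟩
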